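/- arXiv:2407.20177 — 6 statements merged into one kernel-verified Lean document; each statement's English description precedes it below -/
import Mathlib

section
/- Let m ≥ 1, β_i > 0, γ_i > 0 for i = 1,…,m, and let N > 0. If N ∈ S(N) = {N ∈ ℝ^m : N_i > 0 for all i, ∑_{i=1}^m N_i = N} satisfies β_a · γ_a · (N_a)^{-γ_a - 1} = β_b · γ_b · (N_b)^{-γ_b - 1} for every pair of indices a, b, then N minimizes f(N) = ∑_{i=1}^m β_i · N_i^{-γ_i} over S(N); that is, f(N) ≤ f(M) for all M ∈ S(N). -/
open Finset Real

/-- Tangent line inequality for `t ↦ t ^ (-g)` at `b`. -/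
lemma tangent_rpow_neg {b c g : ℝ} (hb : 0 < b) (hc : 0 < c) (hg : 0 < g) :
    b ^ (-g) - g * b ^ (-g - 1) * (c - b) ≤ c ^ (-g) := by
  have hu : 0 < c / b := div_pos hc hb
  -- Bernoulli-type: (c/b)^(-g) ≥ 1 - g*(c/b - 1)
  have h1 : 1 - g * (c / b - 1) ≤ (c / b) ^ (-g) := by
    have hlog : Real.log (c / b) ≤ c / b - 1 := Real.log_le_sub_one_of_pos hu
    have h2 : (-g) * Real.log (c / b) + 1 ≤ Real.exp ((-g) * Real.log (c / b)) :=
      Real.add_one_le_exp _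
    have h3 : (c / b) ^ (-g) = Real.exp ((-g) * Real.log (c / b)) := by
      rw [Real.rpow_def_of_pos hu, mul_comm]
    have h4 : -g * (c / b - 1) ≤ -g * Real.log (c / b) := by nlinarith
    rw [h3]; linarith
  have hmul : b ^ (-g) * (1 - g * (c / b - 1)) ≤ b ^ (-g) * (c / b) ^ (-g) :=
    mul_le_mul_of_nonneg_left h1 (Real.rpow_nonneg hb.le _)
  have hbne : b ^ (-g) ≠ 0 := (Real.rpow_pos_of_pos hb _).ne'
  have hdiv : b ^ (-g) * (c / b) ^ (-g) = c ^ (-g) := by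
    rw [Real.div_rpow hc.le hb.le]
    field_simp
  have hpow : b ^ (-g - 1) = b ^ (-g) / b := by
    rw [Real.rpow_sub hb, Real.rpow_one]
  rw [hdiv] at hmul
  rw [hpow]
  have : b ^ (-g) * (1 - g * (c / b - 1)) = b ^ (-g) - g * (b ^ (-g) / b) * (c - b) := by
    field_simp
  linarith [this ▸ hmul]

/-- Sufficiency of the first-order (KKT) conditions: a feasible point at which
all weighted marginal losses coincide is a global minimizer on `S(N)`. -/
theorem minimizer_of_kkt_domain_loss (m : ℕ) (hm : 1 ≤ m) (β γ : Fin m → ℝ)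
    (hβ : ∀ i, 0 < β i) (hγ : ∀ i, 0 < γ i) (N : ℝ) (hN : 0 < N)
    (x : Fin m → ℝ) (hx_pos : ∀ i, 0 < x i) (hx_sum : ∑ i, x i = N)
    (hkkt : ∀ a b : Fin m,
      β a * γ a * x a ^ (-γ a - 1) = β b * γ b * x b ^ (-γ b - 1)) :
    ∀ z : Fin m → ℝ, (∀ i, 0 < z i) → ∑ i, z i = N →
      ∑ i, β i * x i ^ (-γ i) ≤ ∑ i, β i * z i ^ (-γ i) := by
  intro z hz_pos hz_sum
  have i0 : Fin m := ⟨0, hm⟩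
  set lam : ℝ := β i0 * γ i0 * x i0 ^ (-γ i0 - 1) with hlam
  have key : ∀ i, β i * x i ^ (-γ i) - lam * (z i - x i) ≤ β i * z i ^ (-γ i) := by
    intro i
    have h := tangent_rpow_neg (hx_pos i) (hz_pos i) (hγ i)
    have hβi := (hβ i).le
    have hlami : lam = β i * γ i * x i ^ (-γ i - 1) := (hkkt i i0).symm
    rw [hlami]
    nlinarith [mul_le_mul_of_nonneg_left h hβi]
  calc ∑ i, β i * x i ^ (-γ i)
      = ∑ i, (β i * x i ^ (-γ i) - lam * (z i - x i)) := by
        rw [Finset.sum_sub_distrib, ← Finset.mul_sum, Finset.sum_sub_distrib,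
          hz_sum, hx_sum, sub_self, mul_zero, sub_zero]
    _ ≤ ∑ i, β i * z i ^ (-γ i) := Finset.sum_le_sum fun i _ => key i
end

section
/- Let m ≥ 1, β_i > 0, γ_i > 0 for i = 1,…,m. Let N* be the minimizer of f(N) = ∑_{i=1}^m β_i · N_i^{-γ_i} on S(N^{(1)}) and M* the minimizer of f on S(N^{(2)}), for budgets N^{(1)}, N^{(2)} > 0. Fix an index b and suppose M_b* = m₀ · N_b* for some scalar m₀ > 0. Then for every index a one has M_a* = m₀^{(γ_b + 1)/(γ_a + 1)} · N_a*. -/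
open Finset Real

-- KKT lemma
lemma kkt_eq (m : ℕ) (β γ : Fin m → ℝ) (hβ : ∀ i, 0 < β i) (hγ : ∀ i, 0 < γ i)
    (N : ℝ) (x : Fin m → ℝ) (hx_pos : ∀ i, 0 < x i) (hx_sum : ∑ i, x i = N)
    (hx_min : ∀ z : Fin m → ℝ, (∀ i, 0 < z i) → ∑ i, z i = N →
      ∑ i, β i * x i ^ (-γ i) ≤ ∑ i, β i * z i ^ (-γ i))
    (i j : Fin m) :
    β i * γ i * x i ^ (-γ i - 1) = β j * γ j * x j ^ (-γ j - 1) := by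
  rcases eq_or_ne i j with rfl | hij
  · rfl
  set g : ℝ → ℝ := fun t => β i * (x i + t) ^ (-γ i) + β j * (x j - t) ^ (-γ j) with hg
  have hsplit : ∀ h : Fin m → ℝ,
      ∑ k, h k = h i + (h j + ∑ k ∈ ((univ.erase i).erase j), h k) := by
    intro h
    rw [← Finset.add_sum_erase _ h (mem_univ i),
        ← Finset.add_sum_erase _ h (Finset.mem_erase.2 ⟨hij.symm, mem_univ j⟩)]
  have hmin : IsLocalMin g 0 := by
    have hε : (0:ℝ) < min (x i) (x j) := lt_min (hx_pos i) (hx_pos j)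
    filter_upwards [Metric.ball_mem_nhds (0:ℝ) hε] with t ht
    rw [Metric.mem_ball, Real.dist_eq, sub_zero] at ht
    have hti : -x i < t := by
      have := (abs_lt.1 ht).1; have := min_le_left (x i) (x j); linarith
    have htj : t < x j := by
      have := (abs_lt.1 ht).2; have := min_le_right (x i) (x j); linarith
    set z : Fin m → ℝ := fun k => x k + (if k = i then t else 0) + (if k = j then -t else 0)
      with hz
    have hzpos : ∀ k, 0 < z k := by
      intro k
      rcases eq_or_ne k i with rfl | hki
      · simp [hz, hij]; linarith
      rcases eq_or_ne k j with rfl | hkj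
      · simp [hz, hki]; linarith [hx_pos k]
      · simp [hz, hki, hkj, hx_pos k]
    have hzsum : ∑ k, z k = N := by
      simp only [hz, Finset.sum_add_distrib, Finset.sum_ite_eq', mem_univ, if_true, hx_sum]
      ring
    have key := hx_min z hzpos hzsum
    rw [hsplit (fun k => β k * x k ^ (-γ k)), hsplit (fun k => β k * z k ^ (-γ k))] at key
    have hzi : z i = x i + t := by simp [hz, hij]
    have hzj : z j = x j - t := by simp [hz, hij.symm]; ring
    have hrest : ∑ k ∈ ((univ.erase i).erase j), β k * z k ^ (-γ k)
        = ∑ k ∈ ((univ.erase i).erase j), β k * x k ^ (-γ k) := by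
      refine Finset.sum_congr rfl fun k hk => ?_
      have h1 := Finset.mem_erase.1 hk
      have hkj := h1.1
      have hki := (Finset.mem_erase.1 h1.2).1
      simp [hz, hki, hkj]
    rw [hzi, hzj, hrest] at key
    simp only [hg]
    simp only [add_zero, sub_zero]
    linarith
  have hd1 : HasDerivAt (fun t : ℝ => β i * (x i + t) ^ (-γ i))
      (β i * (1 * -γ i * (x i + 0) ^ (-γ i - 1))) 0 := by
    exact (((hasDerivAt_id (0:ℝ)).const_add (x i)).rpow_const
      (Or.inl (by simpa using (hx_pos i).ne'))).const_mul (β i)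
  have hd2 : HasDerivAt (fun t : ℝ => β j * (x j - t) ^ (-γ j))
      (β j * (-1 * -γ j * (x j - 0) ^ (-γ j - 1))) 0 := by
    have : HasDerivAt (fun t : ℝ => x j - t) (-1) 0 := by
      exact (hasDerivAt_id (0:ℝ)).const_sub (x j)
    exact (this.rpow_const (Or.inl (by simpa using (hx_pos j).ne'))).const_mul (β j)
  have hD := hmin.hasDerivAt_eq_zero (hd1.add hd2)
  simp only [add_zero, sub_zero] at hD
  linear_combination -hD

/-- If at two budgets the optimal allocation of domain `b` scales by a factor
`m₀`, then the optimal allocation of any domain `a` scales by the factor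
`m₀ ^ ((γ b + 1) / (γ a + 1))`. -/
theorem optimal_allocation_cross_scaling (m : ℕ) (hm : 1 ≤ m)
    (β γ : Fin m → ℝ) (hβ : ∀ i, 0 < β i) (hγ : ∀ i, 0 < γ i)
    (N₁ N₂ : ℝ) (hN₁ : 0 < N₁) (hN₂ : 0 < N₂)
    (x : Fin m → ℝ) (hx_pos : ∀ i, 0 < x i) (hx_sum : ∑ i, x i = N₁)
    (hx_min : ∀ z : Fin m → ℝ, (∀ i, 0 < z i) → ∑ i, z i = N₁ →
      ∑ i, β i * x i ^ (-γ i) ≤ ∑ i, β i * z i ^ (-γ i))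
    (y : Fin m → ℝ) (hy_pos : ∀ i, 0 < y i) (hy_sum : ∑ i, y i = N₂)
    (hy_min : ∀ z : Fin m → ℝ, (∀ i, 0 < z i) → ∑ i, z i = N₂ →
      ∑ i, β i * y i ^ (-γ i) ≤ ∑ i, β i * z i ^ (-γ i))
    (b : Fin m) (m₀ : ℝ) (hm₀ : 0 < m₀) (hb : y b = m₀ * x b) :
    ∀ a : Fin m, y a = m₀ ^ ((γ b + 1) / (γ a + 1)) * x a := by
  intro a
  have hA := kkt_eq m β γ hβ hγ N₁ x hx_pos hx_sum hx_min a b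
  have hA' := kkt_eq m β γ hβ hγ N₂ y hy_pos hy_sum hy_min a b
  set p := -γ a - 1 with hp_def
  set q := -γ b - 1 with hq_def
  have hβγa : β a * γ a ≠ 0 := (mul_pos (hβ a) (hγ a)).ne'
  have hβγb : β b * γ b ≠ 0 := (mul_pos (hβ b) (hγ b)).ne'
  have hcross : y a ^ p * x b ^ q = x a ^ p * y b ^ q := by
    apply mul_left_cancel₀ (mul_ne_zero hβγa hβγb)
    calc (β a * γ a) * (β b * γ b) * (y a ^ p * x b ^ q)
        = (β a * γ a * y a ^ p) * (β b * γ b * x b ^ q) := by ring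
      _ = (β b * γ b * y b ^ q) * (β a * γ a * x a ^ p) := by rw [hA', ← hA]
      _ = (β a * γ a) * (β b * γ b) * (x a ^ p * y b ^ q) := by ring
  have hybq : y b ^ q = m₀ ^ q * x b ^ q := by
    rw [hb, Real.mul_rpow hm₀.le (hx_pos b).le]
  have hya : y a ^ p = m₀ ^ q * x a ^ p := by
    have hxbq : x b ^ q ≠ 0 := (Real.rpow_pos_of_pos (hx_pos b) q).ne'
    apply mul_right_cancel₀ hxbq
    rw [hcross, hybq]; ring
  have hrpos : 0 < y a / x a := div_pos (hy_pos a) (hx_pos a)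
  have hr : (y a / x a) ^ p = m₀ ^ q := by
    rw [Real.div_rpow (hy_pos a).le (hx_pos a).le, hya, mul_div_assoc,
      div_self (Real.rpow_pos_of_pos (hx_pos a) p).ne', mul_one]
  have hp : p ≠ 0 := by
    have := hγ a
    simp only [hp_def]
    intro h; linarith [h]
  have hfinal : y a / x a = m₀ ^ (q * (1/p)) := by
    calc y a / x a = (y a / x a) ^ (p * (1/p)) := by
          rw [mul_one_div_cancel hp, Real.rpow_one]
      _ = ((y a / x a) ^ p) ^ (1/p) := Real.rpow_mul hrpos.le p (1/p)
      _ = (m₀ ^ q) ^ (1/p) := by rw [hr]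
      _ = m₀ ^ (q * (1/p)) := (Real.rpow_mul hm₀.le q (1/p)).symm
  have hexp : q * (1/p) = (γ b + 1) / (γ a + 1) := by
    rw [mul_one_div, show q = -(γ b + 1) by rw [hq_def]; ring,
      show p = -(γ a + 1) by rw [hp_def]; ring, neg_div_neg_eq]
  rw [hexp] at hfinal
  rw [div_eq_iff (hx_pos a).ne'] at hfinal
  linarith [hfinal]
end

section
/- Let m ≥ 1, β_i > 0, γ_i > 0 for i = 1,…,m. Let N*(N^{(1)}) and N*(N^{(2)}) be the optimal allocations (minimizers of f(N) = ∑_{i=1}^m β_i · N_i^{-γ_i} on S(N^{(1)}) and S(N^{(2)}) respectively) for two budgets N^{(1)}, N^{(2)} > 0. Define M ∈ ℝ^m elementwise by M_i = (N_i*(N^{(2)}))² / N_i*(N^{(1)}), and let N^{(3)} = ∑_{i=1}^m M_i. Then M is the optimal allocation at budget N^{(3)}: M minimizes f on S(N^{(3)}). -/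
open Finset Real

/-- Bernoulli-type inequality for negative exponents. -/
lemma neg_rpow_tangent_base {g s : ℝ} (hg : 0 < g) (hs : 0 < s) :
    1 - g * (s - 1) ≤ s ^ (-g) := by
  by_cases hc : 1 - g * (s - 1) ≤ 0
  · exact hc.trans (Real.rpow_pos_of_pos hs _).le
  push_neg at hc
  set c : ℝ := 1 - g * (s - 1) with hcdef
  have h1g : (0:ℝ) < 1 + g := by linarith
  have hgm := Real.geom_mean_le_arith_mean2_weighted
    (w₁ := g / (1 + g)) (w₂ := 1 / (1 + g)) (p₁ := s) (p₂ := c)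
    (by positivity) (by positivity) hs.le hc.le (by field_simp; ring)
  have harith : g / (1 + g) * s + 1 / (1 + g) * c = 1 := by
    field_simp [hcdef]; ring
  rw [harith] at hgm
  have hpow2 : (s ^ (g / (1 + g)) * c ^ (1 / (1 + g))) ^ (1 + g) ≤ 1 := by
    calc (s ^ (g / (1 + g)) * c ^ (1 / (1 + g))) ^ (1 + g) ≤ 1 ^ (1 + g) :=
          Real.rpow_le_rpow (by positivity) hgm h1g.le
      _ = 1 := Real.one_rpow _
  have hexp : (s ^ (g / (1 + g)) * c ^ (1 / (1 + g))) ^ (1 + g) = s ^ g * c := by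
    rw [Real.mul_rpow (by positivity) (by positivity), ← Real.rpow_mul hs.le,
      ← Real.rpow_mul hc.le, div_mul_cancel₀ _ h1g.ne', one_div,
      inv_mul_cancel₀ h1g.ne', Real.rpow_one]
  rw [hexp] at hpow2
  have hsg : (0:ℝ) < s ^ g := Real.rpow_pos_of_pos hs _
  rw [Real.rpow_neg hs.le, ← one_div, le_div_iff₀ hsg]
  linarith

/-- Tangent-line inequality for `t ↦ t ^ (-g)` on positive reals. -/
lemma neg_rpow_tangent {g t s : ℝ} (hg : 0 < g) (ht : 0 < t) (hs : 0 < s) :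
    t ^ (-g) - g * t ^ (-g - 1) * (s - t) ≤ s ^ (-g) := by
  have hb := neg_rpow_tangent_base hg (s := s / t) (by positivity)
  have hdiv : (s / t) ^ (-g) = s ^ (-g) / t ^ (-g) := Real.div_rpow hs.le ht.le _
  have htg : (0:ℝ) < t ^ (-g) := Real.rpow_pos_of_pos ht _
  have hrec : t ^ (-g - 1) = t ^ (-g) / t := by
    rw [Real.rpow_sub ht, Real.rpow_one]
  have h2 := mul_le_mul_of_nonneg_left hb htg.le
  rw [hdiv] at h2
  have hrhs : t ^ (-g) * (s ^ (-g) / t ^ (-g)) = s ^ (-g) := by field_simp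
  rw [hrhs] at h2
  calc t ^ (-g) - g * t ^ (-g - 1) * (s - t)
      = t ^ (-g) * (1 - g * (s / t - 1)) := by rw [hrec]; field_simp
    _ ≤ s ^ (-g) := h2

/-- Stationarity implies global optimality (tangent-line argument). -/
lemma stationary_implies_min {m : ℕ} (β γ : Fin m → ℝ) (hβ : ∀ i, 0 < β i)
    (hγ : ∀ i, 0 < γ i) (x z : Fin m → ℝ) (hx : ∀ i, 0 < x i) (hz : ∀ i, 0 < z i)
    (hsum : ∑ i, z i = ∑ i, x i) (l : ℝ)
    (hl : ∀ i, β i * γ i * x i ^ (-γ i - 1) = l) :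
    ∑ i, β i * x i ^ (-γ i) ≤ ∑ i, β i * z i ^ (-γ i) := by
  have key : ∀ i, β i * x i ^ (-γ i) - l * (z i - x i) ≤ β i * z i ^ (-γ i) := by
    intro i
    have ht := neg_rpow_tangent (hγ i) (hx i) (hz i)
    have h2 := mul_le_mul_of_nonneg_left ht (hβ i).le
    calc β i * x i ^ (-γ i) - l * (z i - x i)
        = β i * (x i ^ (-γ i) - γ i * x i ^ (-γ i - 1) * (z i - x i)) := by
          rw [← hl i]; ring
      _ ≤ β i * z i ^ (-γ i) := h2
  calc ∑ i, β i * x i ^ (-γ i)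
      = ∑ i, (β i * x i ^ (-γ i) - l * (z i - x i)) := by
        rw [Finset.sum_sub_distrib, ← Finset.mul_sum, Finset.sum_sub_distrib, hsum,
          sub_self, mul_zero, sub_zero]
    _ ≤ ∑ i, β i * z i ^ (-γ i) := Finset.sum_le_sum fun i _ => key i

/-- Optimality implies the Lagrange stationarity condition. -/
lemma min_implies_stationary {m : ℕ} (β γ : Fin m → ℝ) (hβ : ∀ i, 0 < β i)
    (hγ : ∀ i, 0 < γ i) (N : ℝ) (x : Fin m → ℝ) (hx_pos : ∀ i, 0 < x i)
    (hx_sum : ∑ i, x i = N)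
    (hx_min : ∀ z : Fin m → ℝ, (∀ i, 0 < z i) → ∑ i, z i = N →
      ∑ i, β i * x i ^ (-γ i) ≤ ∑ i, β i * z i ^ (-γ i))
    (i j : Fin m) :
    β i * γ i * x i ^ (-γ i - 1) = β j * γ j * x j ^ (-γ j - 1) := by
  rcases eq_or_ne i j with rfl | hij
  · rfl
  have hmemi : i ∈ univ.erase j := Finset.mem_erase.2 ⟨hij, Finset.mem_univ i⟩
  have hsplit : ∀ v : Fin m → ℝ,
      ∑ k, v k = v j + (v i + ∑ k ∈ (univ.erase j).erase i, v k) := by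
    intro v
    rw [← Finset.add_sum_erase _ v (Finset.mem_univ j), ← Finset.add_sum_erase _ v hmemi]
  set ψ : ℝ → ℝ := fun t => β i * (x i + t) ^ (-γ i) + β j * (x j - t) ^ (-γ j) with hψ
  have hmem : Set.Ioo (-(x i)) (x j) ∈ nhds (0:ℝ) :=
    Ioo_mem_nhds (by linarith [hx_pos i]) (hx_pos j)
  have hmin : IsLocalMin ψ 0 := by
    filter_upwards [hmem] with t ht
    set z : Fin m → ℝ := fun k => if k = i then x i + t else if k = j then x j - t else x k
      with hzdef
    have hzi : z i = x i + t := by simp [hzdef]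
    have hzj : z j = x j - t := by simp [hzdef, hij.symm]
    have hzk : ∀ k, k ≠ i → k ≠ j → z k = x k := by
      intro k hki hkj; simp [hzdef, hki, hkj]
    have hz_pos : ∀ k, 0 < z k := by
      intro k
      rcases eq_or_ne k i with rfl | hki
      · rw [hzi]; linarith [ht.1]
      rcases eq_or_ne k j with rfl | hkj
      · rw [hzj]; linarith [ht.2]
      · rw [hzk k hki hkj]; exact hx_pos k
    have hrest : ∀ F : Fin m → ℝ → ℝ,
        ∑ k ∈ (univ.erase j).erase i, F k (z k) = ∑ k ∈ (univ.erase j).erase i, F k (x k) := by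
      intro F
      refine Finset.sum_congr rfl fun k hk => ?_
      rw [hzk k (Finset.ne_of_mem_erase hk) (Finset.ne_of_mem_erase (Finset.mem_of_mem_erase hk))]
    have hz_sum : ∑ k, z k = N := by
      rw [hsplit z, hzi, hzj, hrest (fun _ s => s), ← hx_sum, hsplit x]
      ring
    have h1 := hx_min z hz_pos hz_sum
    have e1 : ∑ k, β k * z k ^ (-γ k)
        = ψ t + ∑ k ∈ (univ.erase j).erase i, β k * x k ^ (-γ k) := by
      rw [hsplit (fun k => β k * z k ^ (-γ k)), hzi, hzj,
        hrest (fun k s => β k * s ^ (-γ k))]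
      simp only [hψ]; ring
    have e2 : ∑ k, β k * x k ^ (-γ k)
        = ψ 0 + ∑ k ∈ (univ.erase j).erase i, β k * x k ^ (-γ k) := by
      rw [hsplit (fun k => β k * x k ^ (-γ k))]
      simp only [hψ, add_zero, sub_zero]; ring
    rw [e1, e2] at h1
    simpa using h1
  have hdi : HasDerivAt (fun t : ℝ => β i * (x i + t) ^ (-γ i))
      (β i * (1 * -γ i * (x i + 0) ^ (-γ i - 1))) 0 := by
    have hbase : HasDerivAt (fun t : ℝ => x i + t) 1 0 := (hasDerivAt_id 0).const_add (x i)
    exact (hbase.rpow_const (Or.inl (by simpa using (hx_pos i).ne'))).const_mul (β i)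
  have hdj : HasDerivAt (fun t : ℝ => β j * (x j - t) ^ (-γ j))
      (β j * (-1 * -γ j * (x j - 0) ^ (-γ j - 1))) 0 := by
    have hbase : HasDerivAt (fun t : ℝ => x j - t) (-1) 0 := by
      simpa using (hasDerivAt_id (0:ℝ)).const_sub (x j)
    exact (hbase.rpow_const (Or.inl (by simpa using (hx_pos j).ne'))).const_mul (β j)
  have hD : HasDerivAt ψ (β i * (1 * -γ i * (x i + 0) ^ (-γ i - 1))
      + β j * (-1 * -γ j * (x j - 0) ^ (-γ j - 1))) 0 := hdi.add hdj
  have hzero := hmin.deriv_eq_zero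
  rw [hD.deriv] at hzero
  simp only [add_zero, sub_zero, one_mul, neg_one_mul, neg_neg, neg_mul, mul_neg] at hzero
  linarith

/-- Scale-dependent optimal composition, case `k = 1`: from the optimal
allocations at two budgets, the elementwise allocation
`M i = (N_i*(N⁽²⁾))² / N_i*(N⁽¹⁾)` is optimal for the budget `∑ i, M i`. -/
theorem optimal_allocation_projection_square (m : ℕ) (hm : 1 ≤ m)
    (β γ : Fin m → ℝ) (hβ : ∀ i, 0 < β i) (hγ : ∀ i, 0 < γ i)
    (N₁ N₂ : ℝ) (hN₁ : 0 < N₁) (hN₂ : 0 < N₂)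
    (x : Fin m → ℝ) (hx_pos : ∀ i, 0 < x i) (hx_sum : ∑ i, x i = N₁)
    (hx_min : ∀ z : Fin m → ℝ, (∀ i, 0 < z i) → ∑ i, z i = N₁ →
      ∑ i, β i * x i ^ (-γ i) ≤ ∑ i, β i * z i ^ (-γ i))
    (y : Fin m → ℝ) (hy_pos : ∀ i, 0 < y i) (hy_sum : ∑ i, y i = N₂)
    (hy_min : ∀ z : Fin m → ℝ, (∀ i, 0 < z i) → ∑ i, z i = N₂ →
      ∑ i, β i * y i ^ (-γ i) ≤ ∑ i, β i * z i ^ (-γ i))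
    (M : Fin m → ℝ) (hM : ∀ i, M i = (y i) ^ 2 / x i)
    (N₃ : ℝ) (hN₃ : N₃ = ∑ i, M i) :
    (∀ i, 0 < M i) ∧ ∑ i, M i = N₃ ∧
      ∀ z : Fin m → ℝ, (∀ i, 0 < z i) → ∑ i, z i = N₃ →
        ∑ i, β i * M i ^ (-γ i) ≤ ∑ i, β i * z i ^ (-γ i) := by
  have hM_pos : ∀ i, 0 < M i := by
    intro i; rw [hM i]; exact div_pos (pow_pos (hy_pos i) 2) (hx_pos i)
  refine ⟨hM_pos, hN₃.symm, ?_⟩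
  intro z hz_pos hz_sum
  set i₀ : Fin m := ⟨0, hm⟩
  set L : ℝ := (β i₀ * γ i₀ * y i₀ ^ (-γ i₀ - 1)) ^ 2 / (β i₀ * γ i₀ * x i₀ ^ (-γ i₀ - 1))
    with hL
  have hstat : ∀ i, β i * γ i * M i ^ (-γ i - 1) = L := by
    intro i
    have hcx := min_implies_stationary β γ hβ hγ N₁ x hx_pos hx_sum hx_min i i₀
    have hcy := min_implies_stationary β γ hβ hγ N₂ y hy_pos hy_sum hy_min i i₀
    have hMi : M i ^ (-γ i - 1)
        = y i ^ (-γ i - 1) * y i ^ (-γ i - 1) * (x i ^ (-γ i - 1))⁻¹ := by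
      rw [hM i, div_eq_mul_inv, sq,
        Real.mul_rpow (mul_nonneg (hy_pos i).le (hy_pos i).le) (inv_nonneg.2 (hx_pos i).le),
        Real.mul_rpow (hy_pos i).le (hy_pos i).le, Real.inv_rpow (hx_pos i).le]
    have hxpow : (0:ℝ) < x i ^ (-γ i - 1) := Real.rpow_pos_of_pos (hx_pos i) _
    have hbg : (0:ℝ) < β i * γ i := mul_pos (hβ i) (hγ i)
    have : β i * γ i * M i ^ (-γ i - 1)
        = (β i * γ i * y i ^ (-γ i - 1)) ^ 2 / (β i * γ i * x i ^ (-γ i - 1)) := by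
      rw [hMi]; field_simp
    rw [this, hcx, hcy, hL]
  have hsum_eq : ∑ k, z k = ∑ k, M k := by rw [hz_sum, hN₃]
  exact stationary_implies_min β γ hβ hγ M z hM_pos hz_pos hsum_eq L hstat
end

section
/- Let m ≥ 1, β_i > 0, γ_i > 0 for i = 1,…,m. Let N*(N^{(1)}), N*(N^{(2)}), N*(N^{(3)}) be the optimal allocations (minimizers of f(N) = ∑_{i=1}^m β_i · N_i^{-γ_i} on the respective feasible sets) for three positive budgets with N^{(1)} ≠ N^{(2)}. Then there exists a real constant k such that for every index i, N_i*(N^{(3)}) = N_i*(N^{(2)}) · ( N_i*(N^{(2)}) / N_i*(N^{(1)}) )^k. Moreover, if N^{(1)} < N^{(2)} < N^{(3)}, then k > 0. -/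
open Finset Real


private theorem foc {m : ℕ} (β γ : Fin m → ℝ) (hβ : ∀ i, 0 < β i) (hγ : ∀ i, 0 < γ i)
    (N : ℝ) (v : Fin m → ℝ) (hv_pos : ∀ i, 0 < v i) (hv_sum : ∑ i, v i = N)
    (hv_min : ∀ w : Fin m → ℝ, (∀ i, 0 < w i) → ∑ i, w i = N →
      ∑ i, β i * v i ^ (-γ i) ≤ ∑ i, β i * w i ^ (-γ i))
    (i j : Fin m) :
    β i * γ i * v i ^ (-γ i - 1) = β j * γ j * v j ^ (-γ j - 1) := by
  rcases eq_or_ne i j with rfl | hij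
  · rfl
  set w : ℝ → Fin m → ℝ := fun t k => if k = j then v j - t else if k = i then v i + t else v k
    with hw
  have hw0 : w 0 = v := by
    funext k; simp only [hw]; split_ifs with h1 h2
    · subst h1; ring
    · subst h2; ring
    · rfl
  have hsum : ∀ t, ∑ k, w t k = N := by
    intro t
    have : ∀ k, w t k = v k + ((if k = j then -t else 0) + (if k = i then t else 0)) := by
      intro k; simp only [hw]; split_ifs with h1 h2 h3
      · exact absurd (h2.symm.trans h1) hij
      · subst h1; ring
      · subst h3; ring
      · ring
    rw [Finset.sum_congr rfl fun k _ => this k]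
    simp [Finset.sum_add_distrib, hv_sum]
  set δ := min (v i) (v j) with hδdef
  have hδ : 0 < δ := lt_min (hv_pos i) (hv_pos j)
  have hpos : ∀ t, |t| < δ → ∀ k, 0 < w t k := by
    intro t ht k
    have h1 : t < v j := lt_of_lt_of_le (lt_of_abs_lt ht) (min_le_right _ _)
    have h2 : -t < v i := lt_of_lt_of_le (lt_of_abs_lt (abs_neg t ▸ ht)) (min_le_left _ _)
    simp only [hw]; split_ifs
    · linarith
    · linarith
    · exact hv_pos k
  set φ : ℝ → ℝ := fun t => ∑ k, β k * w t k ^ (-γ k) with hφ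
  have hmin : IsLocalMin φ 0 := by
    rw [IsLocalMin, IsMinFilter]
    rw [Metric.eventually_nhds_iff]
    refine ⟨δ, hδ, fun t ht => ?_⟩
    rw [Real.dist_eq, sub_zero] at ht
    have := hv_min (w t) (hpos t ht) (hsum t)
    simpa [hφ, hw0] using this
  -- derivative
  have hD : HasDerivAt φ
      (∑ k, (if k = j then β j * (-1 * -γ j * v j ^ (-γ j - 1))
        else if k = i then β i * (1 * -γ i * v i ^ (-γ i - 1)) else 0)) 0 := by
    apply HasDerivAt.fun_sum
    intro k _
    rcases eq_or_ne k j with rfl | hkj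
    · simp only [if_pos rfl]
      have hfun : (fun t => β k * w t k ^ (-γ k)) = fun t => β k * (v k - t) ^ (-γ k) := by
        funext t; simp [hw]
      rw [hfun]
      have h1 : HasDerivAt (fun t : ℝ => v k - t) (-1) 0 := (hasDerivAt_id 0).const_sub (v k)
      have h2 := h1.rpow_const (p := -γ k) (Or.inl (by simp [(hv_pos k).ne']))
      simpa using h2.const_mul (β k)
    · rcases eq_or_ne k i with rfl | hki
      · simp only [if_neg hkj, if_pos rfl]
        have hfun : (fun t => β k * w t k ^ (-γ k)) = fun t => β k * (v k + t) ^ (-γ k) := by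
          funext t; simp [hw, hkj]
        rw [hfun]
        have h1 : HasDerivAt (fun t : ℝ => v k + t) 1 0 := by
          simpa using (hasDerivAt_id (0:ℝ)).const_add (v k)
        have h2 := h1.rpow_const (p := -γ k) (Or.inl (by simp [(hv_pos k).ne']))
        simpa using h2.const_mul (β k)
      · simp only [if_neg hkj, if_neg hki]
        have hfun : (fun t => β k * w t k ^ (-γ k)) = fun _ => β k * v k ^ (-γ k) := by
          funext t; simp [hw, hkj, hki]
        rw [hfun]
        exact hasDerivAt_const 0 _
  have hzero := hmin.hasDerivAt_eq_zero hD
  have hsum2 : (∑ k, (if k = j then β j * (-1 * -γ j * v j ^ (-γ j - 1))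
        else if k = i then β i * (1 * -γ i * v i ^ (-γ i - 1)) else 0))
      = β j * (γ j * v j ^ (-γ j - 1)) + β i * (-γ i * v i ^ (-γ i - 1)) := by
    have : ∀ k, (if k = j then β j * (-1 * -γ j * v j ^ (-γ j - 1))
        else if k = i then β i * (1 * -γ i * v i ^ (-γ i - 1)) else 0)
        = (if k = j then β j * (γ j * v j ^ (-γ j - 1)) else 0)
          + (if k = i then β i * (-γ i * v i ^ (-γ i - 1)) else 0) := by
      intro k; split_ifs with h1 h2 h3
      · exact absurd (h2.symm.trans h1) hij
      · ring
      · ring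
      · ring
    rw [Finset.sum_congr rfl fun k _ => this k, Finset.sum_add_distrib]
    simp
  rw [hsum2] at hzero
  nlinarith [hzero]

/-- Converse of the scale-dependent composition theorem: the optimal allocation
at any third budget lies on the one-parameter exponential family generated by
the optimal allocations at two distinct budgets, with exponent `k > 0` when the
budgets are increasing. -/
theorem optimal_allocation_exponential_family (m : ℕ) (hm : 1 ≤ m)
    (β γ : Fin m → ℝ) (hβ : ∀ i, 0 < β i) (hγ : ∀ i, 0 < γ i)
    (N₁ N₂ N₃ : ℝ) (hN₁ : 0 < N₁) (hN₂ : 0 < N₂) (hN₃ : 0 < N₃) (hne : N₁ ≠ N₂)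
    (x : Fin m → ℝ) (hx_pos : ∀ i, 0 < x i) (hx_sum : ∑ i, x i = N₁)
    (hx_min : ∀ w : Fin m → ℝ, (∀ i, 0 < w i) → ∑ i, w i = N₁ →
      ∑ i, β i * x i ^ (-γ i) ≤ ∑ i, β i * w i ^ (-γ i))
    (y : Fin m → ℝ) (hy_pos : ∀ i, 0 < y i) (hy_sum : ∑ i, y i = N₂)
    (hy_min : ∀ w : Fin m → ℝ, (∀ i, 0 < w i) → ∑ i, w i = N₂ →
      ∑ i, β i * y i ^ (-γ i) ≤ ∑ i, β i * w i ^ (-γ i))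
    (z : Fin m → ℝ) (hz_pos : ∀ i, 0 < z i) (hz_sum : ∑ i, z i = N₃)
    (hz_min : ∀ w : Fin m → ℝ, (∀ i, 0 < w i) → ∑ i, w i = N₃ →
      ∑ i, β i * z i ^ (-γ i) ≤ ∑ i, β i * w i ^ (-γ i)) :
    ∃ k : ℝ, (∀ i, z i = y i * (y i / x i) ^ k) ∧
      (N₁ < N₂ → N₂ < N₃ → 0 < k) := by
  set i0 : Fin m := ⟨0, hm⟩ with hi0
  set μ : (Fin m → ℝ) → Fin m → ℝ := fun v i => β i * γ i * v i ^ (-γ i - 1) with hμ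
  have hμpos : ∀ (v : Fin m → ℝ), (∀ i, 0 < v i) → ∀ i, 0 < μ v i := fun v hv i =>
    mul_pos (mul_pos (hβ i) (hγ i)) (Real.rpow_pos_of_pos (hv i) _)
  set l₁ := μ x i0 with hl₁
  set l₂ := μ y i0 with hl₂
  set l₃ := μ z i0 with hl₃
  have hl₁pos : 0 < l₁ := hμpos x hx_pos i0
  have hl₂pos : 0 < l₂ := hμpos y hy_pos i0
  have hl₃pos : 0 < l₃ := hμpos z hz_pos i0
  have hx_foc : ∀ i, μ x i = l₁ := fun i => foc β γ hβ hγ N₁ x hx_pos hx_sum hx_min i i0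
  have hy_foc : ∀ i, μ y i = l₂ := fun i => foc β γ hβ hγ N₂ y hy_pos hy_sum hy_min i i0
  have hz_foc : ∀ i, μ z i = l₃ := fun i => foc β γ hβ hγ N₃ z hz_pos hz_sum hz_min i i0
  have hγ1 : ∀ i, (0:ℝ) < γ i + 1 := fun i => by linarith [hγ i]
  -- log (v i / u i) = log (lu / lv) / (γ i + 1)
  have logrel : ∀ (u v : Fin m → ℝ) (lu lv : ℝ), (∀ i, 0 < u i) → (∀ i, 0 < v i) →
      (∀ i, μ u i = lu) → (∀ i, μ v i = lv) →
      ∀ i, Real.log (v i / u i) = Real.log (lu / lv) / (γ i + 1) := by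
    intro u v lu lv hu hv hmu hmv i
    have h1 : lu / lv = (v i / u i) ^ (γ i + 1) := by
      rw [← hmu i, ← hmv i]
      simp only [hμ]
      have e : ∀ a : ℝ, 0 < a → a ^ (-γ i - 1) = (a ^ (γ i + 1))⁻¹ := by
        intro a ha
        rw [show -γ i - 1 = -(γ i + 1) by ring, Real.rpow_neg ha.le]
      rw [e _ (hu i), e _ (hv i), Real.div_rpow (hv i).le (hu i).le]
      have hu1 : u i ^ (γ i + 1) ≠ 0 := (Real.rpow_pos_of_pos (hu i) _).ne'
      have hv1 : v i ^ (γ i + 1) ≠ 0 := (Real.rpow_pos_of_pos (hv i) _).ne'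
      have hb : β i ≠ 0 := (hβ i).ne'
      have hg : γ i ≠ 0 := (hγ i).ne'
      field_simp
    have h2 : Real.log (lu / lv) = (γ i + 1) * Real.log (v i / u i) := by
      rw [h1, Real.log_rpow (div_pos (hv i) (hu i))]
    rw [h2, mul_comm, mul_div_assoc, div_self (hγ1 i).ne', mul_one]
  have logxy := logrel x y l₁ l₂ hx_pos hy_pos hx_foc hy_foc
  have logyz := logrel y z l₂ l₃ hy_pos hz_pos hy_foc hz_foc
  -- budget monotone in log ratio sign
  have mono : ∀ (u v : Fin m → ℝ) (lu lv Nu Nv : ℝ), (∀ i, 0 < u i) → (∀ i, 0 < v i) →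
      ∑ i, u i = Nu → ∑ i, v i = Nv →
      (∀ i, Real.log (v i / u i) = Real.log (lu / lv) / (γ i + 1)) →
      Nu < Nv → 0 < Real.log (lu / lv) := by
    intro u v lu lv Nu Nv hu hv hus hvs hlog hlt
    by_contra h
    push_neg at h
    have : ∀ i, v i ≤ u i := by
      intro i
      have h1 : Real.log (v i / u i) ≤ 0 := by
        rw [hlog i]
        exact div_nonpos_of_nonpos_of_nonneg h (hγ1 i).le
      have h2 : v i / u i ≤ 1 := by
        by_contra h3
        push_neg at h3
        exact absurd (Real.log_pos h3) (not_lt.mpr h1)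
      exact (div_le_one (hu i)).mp h2
    have : Nv ≤ Nu := hvs ▸ hus ▸ Finset.sum_le_sum (fun i _ => this i)
    linarith
  -- log(l₁/l₂) ≠ 0
  have hlog12 : Real.log (l₁ / l₂) ≠ 0 := by
    intro h
    apply hne
    have hxy : ∀ i, x i = y i := by
      intro i
      have h1 : Real.log (y i / x i) = 0 := by rw [logxy i, h, zero_div]
      have h2 : y i / x i = 1 := by
        rcases Real.log_eq_zero.mp h1 with h' | h' | h'
        · exact absurd h' (ne_of_gt (div_pos (hy_pos i) (hx_pos i)))
        · exact h'
        · linarith [div_pos (hy_pos i) (hx_pos i)]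
      rw [div_eq_one_iff_eq (hx_pos i).ne'] at h2
      exact h2.symm
    rw [← hx_sum, ← hy_sum]
    exact Finset.sum_congr rfl fun i _ => hxy i
  -- the exponent
  refine ⟨Real.log (l₂ / l₃) / Real.log (l₁ / l₂), ?_, ?_⟩
  · intro i
    have hk : Real.log (z i / y i)
        = Real.log (l₂ / l₃) / Real.log (l₁ / l₂) * Real.log (y i / x i) := by
      rw [logyz i, logxy i]
      field_simp
    have h1 : z i / y i = (y i / x i) ^ (Real.log (l₂ / l₃) / Real.log (l₁ / l₂)) := by
      rw [Real.rpow_def_of_pos (div_pos (hy_pos i) (hx_pos i)),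
        ← Real.exp_log (div_pos (hz_pos i) (hy_pos i)), hk, mul_comm]
    rw [div_eq_iff (hy_pos i).ne'] at h1
    rw [h1]; ring
  · intro h12 h23
    exact div_pos (mono y z l₂ l₃ N₂ N₃ hy_pos hz_pos hy_sum hz_sum logyz h23)
      ((mono x y l₁ l₂ N₁ N₂ hx_pos hy_pos hx_sum hy_sum logxy h12))
end

section
/- Let m ≥ 1, β_i > 0, γ_i > 0 for i = 1,…,m, and let N > 0. Then there exists a unique λ > 0 such that ∑_{i=1}^m ( β_i γ_i / λ )^{1/(γ_i + 1)} = N, and the vector N* defined by N_i* = ( β_i γ_i / λ )^{1/(γ_i + 1)} is the optimal allocation at budget N, i.e., N* minimizes f(N) = ∑_{i=1}^m β_i · N_i^{-γ_i} on S(N). -/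
open Finset Real

private lemma key_convex {c x y : ℝ} (hc : 0 < c) (hx : 0 < x) (hy : 0 < y) :
    x ^ (-c) - c * x ^ (-(c+1)) * (y - x) ≤ y ^ (-c) := by
  have ht : 0 < y / x := div_pos hy hx
  have h1c : (0:ℝ) < 1 + c := by linarith
  have hgm := Real.geom_mean_le_arith_mean2_weighted
    (w₁ := 1/(1+c)) (w₂ := c/(1+c)) (p₁ := (y/x) ^ (-c)) (p₂ := y/x)
    (by positivity) (by positivity) (by positivity) ht.le
    (by field_simp)
  have hprod : ((y/x) ^ (-c)) ^ (1/(1+c)) * (y/x) ^ (c/(1+c)) = 1 := by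
    rw [← Real.rpow_mul ht.le, ← Real.rpow_add ht]
    rw [show -c * (1/(1+c)) + c/(1+c) = 0 by field_simp; ring]
    exact Real.rpow_zero _
  rw [hprod] at hgm
  have h2 : 1 + c ≤ (y/x) ^ (-c) + c * (y/x) := by
    have h := mul_le_mul_of_nonneg_left hgm h1c.le
    have e1 : (1+c) * (1/(1+c) * (y/x)^(-c) + c/(1+c) * (y/x))
        = (y/x)^(-c) + c*(y/x) := by field_simp
    rw [e1, mul_one] at h
    exact h
  have hyx : (y/x) ^ (-c) = y ^ (-c) / x ^ (-c) := Real.div_rpow hy.le hx.le _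
  have hxc : x ^ (-(c+1)) = x ^ (-c) / x := by
    rw [show -(c+1) = -c + (-1) by ring, Real.rpow_add hx, Real.rpow_neg_one]
    ring
  have hA : (0:ℝ) < x ^ (-c) := Real.rpow_pos_of_pos hx _
  have hB : (0:ℝ) < y ^ (-c) := Real.rpow_pos_of_pos hy _
  rw [hyx] at h2
  rw [hxc]
  have hxne : x ≠ 0 := hx.ne'
  have h3 : (1 + c) * x ^ (-c) ≤ y ^ (-c) + c * (y/x) * x ^ (-c) := by
    have h := mul_le_mul_of_nonneg_right h2 hA.le
    calc (1 + c) * x ^ (-c) ≤ (y ^ (-c) / x ^ (-c) + c * (y/x)) * x ^ (-c) := h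
    _ = y ^ (-c) + c * (y/x) * x ^ (-c) := by field_simp
  have key : c * (x ^ (-c) / x) * (y - x) = c * (y/x) * x ^ (-c) - c * x ^ (-c) := by
    field_simp
  linarith [h3, key.le, key.ge]

/-- Lagrange-multiplier characterization of the optimal allocation: there is a
unique `λ > 0` with `∑ i, (β i γ i / λ)^(1/(γ i + 1)) = N`, and the vector
`N_i* = (β i γ i / λ)^(1/(γ i + 1))` minimizes the loss on `S(N)`. -/
theorem optimal_allocation_lagrange (m : ℕ) (hm : 1 ≤ m)
    (β γ : Fin m → ℝ) (hβ : ∀ i, 0 < β i) (hγ : ∀ i, 0 < γ i)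
    (N : ℝ) (hN : 0 < N) :
    (∃! lam : ℝ, 0 < lam ∧
        ∑ i, (β i * γ i / lam) ^ (1 / (γ i + 1)) = N) ∧
      ∀ lam : ℝ, 0 < lam →
        (∑ i, (β i * γ i / lam) ^ (1 / (γ i + 1)) = N) →
        ∀ z : Fin m → ℝ, (∀ i, 0 < z i) → ∑ i, z i = N →
          ∑ i, β i * ((β i * γ i / lam) ^ (1 / (γ i + 1))) ^ (-γ i) ≤
            ∑ i, β i * z i ^ (-γ i) := by
  have hne : Nonempty (Fin m) := ⟨⟨0, hm⟩⟩
  set g : ℝ → ℝ := fun lam => ∑ i, (β i * γ i / lam) ^ (1 / (γ i + 1)) with hg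
  constructor
  · -- existence and uniqueness of lam
    have hanti : StrictAntiOn g (Set.Ioi (0:ℝ)) := by
      intro u hu v hv huv
      simp only [Set.mem_Ioi] at hu hv
      apply Finset.sum_lt_sum_of_nonempty Finset.univ_nonempty
      intro i _
      have hβi := hβ i; have hγi := hγ i
      apply Real.rpow_lt_rpow (by positivity)
      · exact div_lt_div_of_pos_left (by positivity) hu huv
      · positivity
    have hcont : ContinuousOn g (Set.Ioi (0:ℝ)) := by
      apply continuousOn_finset_sum
      intro i _
      have hγi := hγ i
      apply ContinuousOn.rpow_const
      · exact (continuousOn_const.div continuousOn_id (fun x hx => ne_of_gt hx))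
      · intro x hx
        right; positivity
    set i0 : Fin m := ⟨0, hm⟩
    have hβ0 := hβ i0; have hγ0 := hγ i0
    set a : ℝ := β i0 * γ i0 * N ^ (-(γ i0 + 1)) with ha_def
    have ha : 0 < a := by positivity
    have hga : N ≤ g a := by
      have h1 : (β i0 * γ i0 / a) ^ (1 / (γ i0 + 1)) = N := by
        rw [ha_def]
        rw [show β i0 * γ i0 / (β i0 * γ i0 * N ^ (-(γ i0 + 1))) = (N ^ (-(γ i0 + 1)))⁻¹ by
          field_simp]
        rw [← Real.rpow_neg hN.le, neg_neg, ← Real.rpow_mul hN.le]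
        rw [mul_one_div, div_self (by positivity : γ i0 + 1 ≠ 0), Real.rpow_one]
      calc N = (β i0 * γ i0 / a) ^ (1 / (γ i0 + 1)) := h1.symm
      _ ≤ g a := Finset.single_le_sum
          (f := fun i => (β i * γ i / a) ^ (1 / (γ i + 1)))
          (fun i _ => by have := hβ i; have := hγ i; positivity) (Finset.mem_univ i0)
    have hmpos : (0:ℝ) < m := by exact_mod_cast hm
    set b : ℝ := max a (Finset.univ.sup' (Finset.univ_nonempty)
        fun i => β i * γ i * (N / m) ^ (-(γ i + 1))) with hb_def
    have hab : a ≤ b := le_max_left _ _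
    have hb : 0 < b := lt_of_lt_of_le ha hab
    have hgb : g b ≤ N := by
      have hterm : ∀ i : Fin m, (β i * γ i / b) ^ (1 / (γ i + 1)) ≤ N / m := by
        intro i
        have hβi := hβ i; have hγi := hγ i
        have hbi : β i * γ i * (N / m) ^ (-(γ i + 1)) ≤ b :=
          le_trans (Finset.le_sup' (fun i => β i * γ i * (N / m) ^ (-(γ i + 1)))
            (Finset.mem_univ i)) (le_max_right _ _)
        have hNm : (0:ℝ) < N / m := by positivity
        have h2 : β i * γ i / b ≤ (N / m) ^ (γ i + 1) := by
          rw [div_le_iff₀ hb]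
          calc β i * γ i = β i * γ i * (N/m) ^ (-(γ i + 1)) * (N/m) ^ (γ i + 1) := by
                rw [mul_assoc, ← Real.rpow_add hNm, neg_add_cancel, Real.rpow_zero, mul_one]
          _ ≤ b * (N/m) ^ (γ i + 1) :=
                mul_le_mul_of_nonneg_right hbi (by positivity)
          _ = (N/m) ^ (γ i + 1) * b := by ring
        calc (β i * γ i / b) ^ (1 / (γ i + 1))
            ≤ ((N/m) ^ (γ i + 1)) ^ (1 / (γ i + 1)) :=
              Real.rpow_le_rpow (by positivity) h2 (by positivity)
        _ = N / m := by
              rw [← Real.rpow_mul hNm.le, mul_one_div, div_self (by positivity : γ i + 1 ≠ 0),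
                Real.rpow_one]
      calc g b ≤ ∑ _i : Fin m, N / m := Finset.sum_le_sum (fun i _ => hterm i)
      _ = m * (N / m) := by
            rw [Finset.sum_const, Finset.card_univ, Fintype.card_fin, nsmul_eq_mul]
      _ = N := by field_simp
    have hsub : Set.Icc a b ⊆ Set.Ioi (0:ℝ) := fun x hx => lt_of_lt_of_le ha hx.1
    obtain ⟨lam, hlam, hglam⟩ :=
      intermediate_value_Icc' hab (hcont.mono hsub) (Set.mem_Icc.mpr ⟨hgb, hga⟩)
    have hlam0 : 0 < lam := lt_of_lt_of_le ha hlam.1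
    refine ⟨lam, ⟨hlam0, hglam⟩, ?_⟩
    rintro y ⟨hy0, hy⟩
    exact hanti.injOn (Set.mem_Ioi.mpr hy0) (Set.mem_Ioi.mpr hlam0) (hy.trans hglam.symm)
  · -- optimality
    intro lam hlam hsum z hz hzsum
    set x : Fin m → ℝ := fun i => (β i * γ i / lam) ^ (1 / (γ i + 1)) with hx_def
    have hxpos : ∀ i, 0 < x i := by
      intro i
      have hβi := hβ i; have hγi := hγ i
      exact Real.rpow_pos_of_pos (by positivity) _
    have hmul : ∀ i, β i * γ i * (x i) ^ (-(γ i + 1)) = lam := by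
      intro i
      have hβi := hβ i; have hγi := hγ i
      have hbase : (0:ℝ) < β i * γ i / lam := by positivity
      have hpow : (x i) ^ (γ i + 1) = β i * γ i / lam := by
        rw [hx_def]
        rw [← Real.rpow_mul hbase.le, one_div, inv_mul_cancel₀ (by positivity : γ i + 1 ≠ 0),
          Real.rpow_one]
      rw [Real.rpow_neg (hxpos i).le, hpow]
      field_simp
    have hper : ∀ i, β i * (x i) ^ (-γ i) - lam * (z i - x i) ≤ β i * (z i) ^ (-γ i) := by
      intro i
      have hβi := hβ i; have hγi := hγ i
      have h := key_convex hγi (hxpos i) (hz i)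
      have h' := mul_le_mul_of_nonneg_left h hβi.le
      have e : β i * ((x i) ^ (-γ i) - γ i * (x i) ^ (-(γ i + 1)) * (z i - x i))
          = β i * (x i) ^ (-γ i) - (β i * γ i * (x i) ^ (-(γ i + 1))) * (z i - x i) := by
        ring
      rw [e, hmul i] at h'
      exact h'
    have hsx : ∑ i, x i = N := hsum
    have hsumle := Finset.sum_le_sum (fun i (_ : i ∈ Finset.univ) => hper i)
    rw [Finset.sum_sub_distrib] at hsumle
    have hzero : ∑ i, lam * (z i - x i) = 0 := by
      rw [← Finset.mul_sum, Finset.sum_sub_distrib, hzsum, hsx, sub_self, mul_zero]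
    rw [hzero, sub_zero] at hsumle
    exact hsumle
end

section
/- Let m ≥ 1, β_i > 0, γ_i > 0 for i = 1,…,m, and let 0 < N^{(1)} < N^{(2)} be two budgets with optimal allocations N*(N^{(1)}) and N*(N^{(2)}) (minimizers of f(N) = ∑_{i=1}^m β_i · N_i^{-γ_i} on S(N^{(1)}) and S(N^{(2)}) respectively). Define φ : [0, ∞) → ℝ by φ(k) = ∑_{i=1}^m N_i*(N^{(2)}) · ( N_i*(N^{(2)}) / N_i*(N^{(1)}) )^k. Then φ is continuous, strictly increasing, φ(0) = N^{(2)}, and φ(k) → ∞ as k → ∞; consequently, for every target budget N^{(t)} ≥ N^{(2)} there exists a unique k ≥ 0 with φ(k) = N^{(t)}, and the allocation M_i = N_i*(N^{(2)}) · ( N_i*(N^{(2)}) / N_i*(N^{(1)}) )^k for this k is the optimal allocation at budget N^{(t)}. -/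
open Finset Real Filter

/-- Convexity inequality: tangent line bound for `t ↦ t ^ (-γ)`. -/
lemma autoscale_aux_convex {a b g : ℝ} (ha : 0 < a) (hb : 0 < b) (hg : 0 < g) :
    a ^ (-g) - g * a ^ (-g - 1) * (b - a) ≤ b ^ (-g) := by
  set u : ℝ := b / a with hu_def
  have hu : 0 < u := div_pos hb ha
  have hlog : Real.log u ≤ u - 1 := Real.log_le_sub_one_of_pos hu
  have hexp : (-g) * Real.log u + 1 ≤ Real.exp ((-g) * Real.log u) :=
    Real.add_one_le_exp _
  have hupow : u ^ (-g) = Real.exp (Real.log u * (-g)) := Real.rpow_def_of_pos hu _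
  have h1 : 1 - g * (u - 1) ≤ u ^ (-g) := by
    rw [hupow, mul_comm (Real.log u)]
    nlinarith [hexp, hlog]
  have hbau : b = a * u := by rw [hu_def]; field_simp
  have hbpow : b ^ (-g) = a ^ (-g) * u ^ (-g) := by
    rw [hbau, Real.mul_rpow ha.le hu.le]
  have hapos : (0:ℝ) < a ^ (-g) := Real.rpow_pos_of_pos ha _
  have hkey : a ^ (-g) * (1 - g * (u - 1)) ≤ b ^ (-g) := by
    rw [hbpow]
    exact mul_le_mul_of_nonneg_left h1 hapos.le
  have heq : a ^ (-g) - g * a ^ (-g - 1) * (b - a) = a ^ (-g) * (1 - g * (u - 1)) := by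
    have h2 : a ^ (-g - 1) = a ^ (-g) / a := by
      have := Real.rpow_sub_one (ne_of_gt ha) (-g)
      simpa [sub_eq_add_neg, add_comm] using this
    rw [h2, hu_def]
    field_simp
  linarith [hkey, heq.ge, heq.le]

/-- Sufficiency: equal marginals imply global optimality on the budget simplex. -/
lemma autoscale_aux_suff {m : ℕ} (β γ w z : Fin m → ℝ)
    (hβ : ∀ i, 0 < β i) (hγ : ∀ i, 0 < γ i)
    (hw : ∀ i, 0 < w i) (hz : ∀ i, 0 < z i) (hsum : ∑ i, z i = ∑ i, w i)
    (lam : ℝ) (hlam : ∀ i, β i * γ i * w i ^ (-γ i - 1) = lam) :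
    ∑ i, β i * w i ^ (-γ i) ≤ ∑ i, β i * z i ^ (-γ i) := by
  have hterm : ∀ i, β i * w i ^ (-γ i) - lam * (z i - w i) ≤ β i * z i ^ (-γ i) := by
    intro i
    have h := autoscale_aux_convex (hw i) (hz i) (hγ i)
    have h2 := mul_le_mul_of_nonneg_left h (hβ i).le
    have h3 : lam * (z i - w i) = β i * (γ i * w i ^ (-γ i - 1) * (z i - w i)) := by
      rw [← hlam i]; ring
    calc β i * w i ^ (-γ i) - lam * (z i - w i)
        = β i * (w i ^ (-γ i) - γ i * w i ^ (-γ i - 1) * (z i - w i)) := by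
          rw [h3]; ring
      _ ≤ β i * z i ^ (-γ i) := h2
  calc ∑ i, β i * w i ^ (-γ i)
      = ∑ i, (β i * w i ^ (-γ i) - lam * (z i - w i)) := by
        rw [Finset.sum_sub_distrib, ← Finset.mul_sum, Finset.sum_sub_distrib, hsum,
          sub_self, mul_zero, sub_zero]
    _ ≤ ∑ i, β i * z i ^ (-γ i) := Finset.sum_le_sum fun i _ => hterm i

/-- Necessity: a minimizer on the budget simplex has equal marginals. -/
lemma autoscale_aux_nec {m : ℕ} (β γ w : Fin m → ℝ)
    (hβ : ∀ i, 0 < β i) (hγ : ∀ i, 0 < γ i)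
    (hw : ∀ i, 0 < w i) (B : ℝ) (hsum : ∑ i, w i = B)
    (hmin : ∀ z : Fin m → ℝ, (∀ i, 0 < z i) → ∑ i, z i = B →
      ∑ i, β i * w i ^ (-γ i) ≤ ∑ i, β i * z i ^ (-γ i))
    (i j : Fin m) :
    β i * γ i * w i ^ (-γ i - 1) = β j * γ j * w j ^ (-γ j - 1) := by
  rcases eq_or_ne i j with rfl | hij
  · rfl
  set ψ : ℝ → ℝ := fun t => β i * (w i + t) ^ (-γ i) + β j * (w j - t) ^ (-γ j) with hψ
  -- ψ has a local minimum at 0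
  have hloc : IsLocalMin ψ 0 := by
    have hε : (0:ℝ) < min (w i) (w j) := lt_min (hw i) (hw j)
    filter_upwards [Metric.ball_mem_nhds (0:ℝ) hε] with t ht
    rw [Metric.mem_ball, Real.dist_eq, sub_zero] at ht
    have hti : |t| < w i := lt_of_lt_of_le ht (min_le_left _ _)
    have htj : |t| < w j := lt_of_lt_of_le ht (min_le_right _ _)
    set z : Fin m → ℝ := fun l => w l + (if l = i then t else 0) - (if l = j then t else 0)
      with hz_def
    have hzpos : ∀ l, 0 < z l := by
      intro l
      have h1 := abs_lt.mp hti
      have h2 := abs_lt.mp htj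
      simp only [hz_def]
      split_ifs with hl1 hl2 hl2
      · exact absurd (hl1.symm.trans hl2) hij
      · subst hl1; linarith
      · subst hl2; linarith
      · linarith [hw l]
    have hzsum : ∑ l, z l = B := by
      simp only [hz_def]
      rw [Finset.sum_sub_distrib, Finset.sum_add_distrib,
        Finset.sum_ite_eq' Finset.univ i (fun _ => t),
        Finset.sum_ite_eq' Finset.univ j (fun _ => t)]
      simp [hsum]
    have hmz := hmin z hzpos hzsum
    -- the difference of sums equals ψ t - ψ 0
    set g : Fin m → ℝ := fun l => β l * z l ^ (-γ l) - β l * w l ^ (-γ l) with hg_def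
    have hg0 : ∀ l ∈ Finset.univ, l ∉ ({i, j} : Finset (Fin m)) → g l = 0 := by
      intro l _ hl
      simp only [Finset.mem_insert, Finset.mem_singleton] at hl
      push_neg at hl
      simp [hg_def, hz_def, hl.1, hl.2]
    have hsum_g : ∑ l, g l = g i + g j := by
      rw [← Finset.sum_subset (Finset.subset_univ ({i, j} : Finset (Fin m))) hg0]
      exact Finset.sum_pair hij
    have hzi : z i = w i + t := by simp [hz_def, hij]
    have hzj : z j = w j - t := by simp [hz_def, Ne.symm hij]
    have hdiff : ψ t - ψ 0 = ∑ l, g l := by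
      rw [hsum_g]
      simp only [hg_def, hψ, hzi, hzj, add_zero, sub_zero]
      ring
    have hsplit : ∑ l, g l = (∑ l, β l * z l ^ (-γ l)) - ∑ l, β l * w l ^ (-γ l) := by
      rw [hg_def, Finset.sum_sub_distrib]
    have : 0 ≤ ψ t - ψ 0 := by
      rw [hdiff, hsplit]
      linarith [hmz]
    linarith
  -- ψ has derivative at 0
  have hdi : HasDerivAt (fun t : ℝ => β i * (w i + t) ^ (-γ i))
      (β i * (1 * (-γ i) * (w i + 0) ^ (-γ i - 1))) 0 := by
    have h1 : HasDerivAt (fun t : ℝ => w i + t) 1 0 := (hasDerivAt_id 0).const_add (w i)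
    have h2 := h1.rpow_const (p := -γ i) (Or.inl (by simpa using (hw i).ne'))
    exact h2.const_mul (β i)
  have hdj : HasDerivAt (fun t : ℝ => β j * (w j - t) ^ (-γ j))
      (β j * ((-1) * (-γ j) * (w j - 0) ^ (-γ j - 1))) 0 := by
    have h1 : HasDerivAt (fun t : ℝ => w j - t) (-1) 0 := by
      simpa using (hasDerivAt_id (0:ℝ)).const_sub (w j)
    have h2 := h1.rpow_const (p := -γ j) (Or.inl (by simpa using (hw j).ne'))
    exact h2.const_mul (β j)
  have hd : HasDerivAt ψ
      (β i * (1 * (-γ i) * (w i + 0) ^ (-γ i - 1)) +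
        β j * ((-1) * (-γ j) * (w j - 0) ^ (-γ j - 1))) 0 := hdi.add hdj
  have hzero := hloc.hasDerivAt_eq_zero hd
  rw [add_zero, sub_zero] at hzero
  nlinarith [hzero]

/-- Correctness of the AutoScale line search: with optimal allocations at two
budgets `N₁ < N₂`, the map `φ(k) = ∑ i, N_i*(N₂) (N_i*(N₂)/N_i*(N₁))^k` is
continuous and strictly increasing on `[0, ∞)`, `φ(0) = N₂`, `φ(k) → ∞`;
hence every target budget `N_t ≥ N₂` is reached at a unique `k ≥ 0`, and the
corresponding allocation is optimal at budget `N_t`. -/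
theorem autoscale_line_search (m : ℕ) (hm : 1 ≤ m)
    (β γ : Fin m → ℝ) (hβ : ∀ i, 0 < β i) (hγ : ∀ i, 0 < γ i)
    (N₁ N₂ : ℝ) (hN₁ : 0 < N₁) (hlt : N₁ < N₂)
    (x : Fin m → ℝ) (hx_pos : ∀ i, 0 < x i) (hx_sum : ∑ i, x i = N₁)
    (hx_min : ∀ z : Fin m → ℝ, (∀ i, 0 < z i) → ∑ i, z i = N₁ →
      ∑ i, β i * x i ^ (-γ i) ≤ ∑ i, β i * z i ^ (-γ i))
    (y : Fin m → ℝ) (hy_pos : ∀ i, 0 < y i) (hy_sum : ∑ i, y i = N₂)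
    (hy_min : ∀ z : Fin m → ℝ, (∀ i, 0 < z i) → ∑ i, z i = N₂ →
      ∑ i, β i * y i ^ (-γ i) ≤ ∑ i, β i * z i ^ (-γ i))
    (φ : ℝ → ℝ) (hφ : ∀ k, φ k = ∑ i, y i * (y i / x i) ^ k) :
    ContinuousOn φ (Set.Ici 0) ∧ StrictMonoOn φ (Set.Ici 0) ∧
      φ 0 = N₂ ∧ Tendsto φ atTop atTop ∧
      ∀ Nt : ℝ, N₂ ≤ Nt →
        (∃! k : ℝ, 0 ≤ k ∧ φ k = Nt) ∧
        ∀ k : ℝ, 0 ≤ k → φ k = Nt →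
          ∀ z : Fin m → ℝ, (∀ i, 0 < z i) → ∑ i, z i = Nt →
            ∑ i, β i * (y i * (y i / x i) ^ k) ^ (-γ i) ≤
              ∑ i, β i * z i ^ (-γ i) := by
  have i₀ : Fin m := ⟨0, hm⟩
  -- equal-marginal conditions at x and y
  have hx_eq : ∀ i j : Fin m, β i * γ i * x i ^ (-γ i - 1) = β j * γ j * x j ^ (-γ j - 1) :=
    autoscale_aux_nec β γ x hβ hγ hx_pos N₁ hx_sum hx_min
  have hy_eq : ∀ i j : Fin m, β i * γ i * y i ^ (-γ i - 1) = β j * γ j * y j ^ (-γ j - 1) :=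
    autoscale_aux_nec β γ y hβ hγ hy_pos N₂ hy_sum hy_min
  -- all coordinates strictly increase: x i < y i
  have hxy : ∀ i, x i < y i := by
    -- there is some coordinate that increases
    have hex : ∃ i, x i < y i := by
      by_contra hcon
      push_neg at hcon
      have : N₂ ≤ N₁ := by
        rw [← hx_sum, ← hy_sum]
        exact Finset.sum_le_sum fun i _ => hcon i
      linarith
    obtain ⟨i₁, hi₁⟩ := hex
    intro j
    have hlam : β j * γ j * y j ^ (-γ j - 1) < β j * γ j * x j ^ (-γ j - 1) := by
      rw [hy_eq j i₁, hx_eq j i₁]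
      have hstr : y i₁ ^ (-γ i₁ - 1) < x i₁ ^ (-γ i₁ - 1) :=
        Real.rpow_lt_rpow_of_neg (hx_pos i₁) hi₁ (by linarith [hγ i₁])
      exact mul_lt_mul_of_pos_left hstr (mul_pos (hβ i₁) (hγ i₁))
    by_contra hcon
    push_neg at hcon
    have : x j ^ (-γ j - 1) ≤ y j ^ (-γ j - 1) :=
      Real.rpow_le_rpow_of_nonpos (hy_pos j) hcon (by linarith [hγ j])
    nlinarith [mul_pos (hβ j) (hγ j)]
  have hr : ∀ i, 1 < y i / x i := fun i => (one_lt_div (hx_pos i)).mpr (hxy i)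
  have hr_pos : ∀ i, 0 < y i / x i := fun i => lt_trans one_pos (hr i)
  -- continuity
  have hφ_fun : φ = fun k => ∑ i, y i * (y i / x i) ^ k := funext hφ
  have hcont : Continuous φ := by
    rw [hφ_fun]
    refine continuous_finset_sum _ fun i _ => Continuous.mul continuous_const ?_
    exact continuous_iff_continuousAt.mpr fun k =>
      Real.continuousAt_const_rpow (ne_of_gt (hr_pos i))
  -- strict monotonicity
  have hmono : StrictMono φ := by
    intro a b hab
    rw [hφ a, hφ b]
    refine Finset.sum_lt_sum_of_nonempty ⟨i₀, Finset.mem_univ i₀⟩ fun i _ => ?_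
    exact mul_lt_mul_of_pos_left (Real.rpow_lt_rpow_of_exponent_lt (hr i) hab) (hy_pos i)
  -- φ 0 = N₂
  have hφ0 : φ 0 = N₂ := by
    rw [hφ 0]
    simp only [Real.rpow_zero, mul_one]
    exact hy_sum
  -- tendsto atTop
  have htop : Tendsto φ atTop atTop := by
    have hle : ∀ k : ℝ, y i₀ * (y i₀ / x i₀) ^ k ≤ φ k := by
      intro k
      rw [hφ k]
      refine Finset.single_le_sum (f := fun i => y i * (y i / x i) ^ k)
        (fun i _ => ?_) (Finset.mem_univ i₀)
      exact le_of_lt (mul_pos (hy_pos i) (Real.rpow_pos_of_pos (hr_pos i) k))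
    refine tendsto_atTop_mono hle ?_
    have h1 : Tendsto (fun k : ℝ => (y i₀ / x i₀) ^ k) atTop atTop := by
      have heq : (fun k : ℝ => (y i₀ / x i₀) ^ k)
          = fun k => Real.exp (Real.log (y i₀ / x i₀) * k) :=
        funext fun k => Real.rpow_def_of_pos (hr_pos i₀) k
      rw [heq]
      exact Real.tendsto_exp_atTop.comp
        (Tendsto.const_mul_atTop (Real.log_pos (hr i₀)) tendsto_id)
    exact Tendsto.const_mul_atTop (hy_pos i₀) h1
  refine ⟨hcont.continuousOn, hmono.strictMonoOn _, hφ0, htop, fun Nt hNt => ?_⟩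
  constructor
  · -- existence and uniqueness of k
    obtain ⟨K, hK⟩ := (tendsto_atTop.mp htop Nt).exists
    have hK0 : (0:ℝ) ≤ K ⊔ 0 := le_max_right _ _
    have hφK : Nt ≤ φ (K ⊔ 0) := by
      rcases le_total K 0 with h | h
      · calc Nt ≤ φ K := hK
          _ ≤ φ (K ⊔ 0) := (hmono.le_iff_le).mpr (le_max_left _ _)
      · simpa [max_eq_left h] using hK
    have hmem : Nt ∈ Set.Icc (φ 0) (φ (K ⊔ 0)) := ⟨hφ0 ▸ hNt, hφK⟩
    obtain ⟨k, hk_mem, hk_eq⟩ := intermediate_value_Icc hK0 hcont.continuousOn hmem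
    refine ⟨k, ⟨hk_mem.1, hk_eq⟩, ?_⟩
    rintro k' ⟨hk'0, hk'_eq⟩
    exact hmono.injective (by rw [hk'_eq, hk_eq])
  · -- optimality of the allocation at budget Nt
    intro k hk0 hkNt z hz_pos hz_sum
    set M : Fin m → ℝ := fun i => y i * (y i / x i) ^ k with hM_def
    have hM_pos : ∀ i, 0 < M i := fun i =>
      mul_pos (hy_pos i) (Real.rpow_pos_of_pos (hr_pos i) k)
    have hM_sum : ∑ i, M i = Nt := by rw [← hkNt, hφ k]
    -- equal marginals at M
    set lam : ℝ := (β i₀ * γ i₀ * y i₀ ^ (-γ i₀ - 1)) *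
      ((y i₀ ^ (-γ i₀ - 1)) / (x i₀ ^ (-γ i₀ - 1))) ^ k with hlam_def
    have hlam : ∀ i, β i * γ i * M i ^ (-γ i - 1) = lam := by
      intro i
      have hMi : M i ^ (-γ i - 1)
          = y i ^ (-γ i - 1) * ((y i ^ (-γ i - 1)) / (x i ^ (-γ i - 1))) ^ k := by
        have h1 : M i ^ (-γ i - 1)
            = y i ^ (-γ i - 1) * ((y i / x i) ^ k) ^ (-γ i - 1) :=
          Real.mul_rpow (hy_pos i).le (Real.rpow_pos_of_pos (hr_pos i) k).le
        rw [h1]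
        congr 1
        rw [← Real.rpow_mul (hr_pos i).le, mul_comm, Real.rpow_mul (hr_pos i).le,
          Real.div_rpow (hy_pos i).le (hx_pos i).le]
      rw [hMi, hlam_def]
      have hx_i := hx_eq i i₀
      have hy_i := hy_eq i i₀
      -- ratio of marginals is independent of i
      have hratio : (y i ^ (-γ i - 1)) / (x i ^ (-γ i - 1))
          = (y i₀ ^ (-γ i₀ - 1)) / (x i₀ ^ (-γ i₀ - 1)) := by
        have hx0 : x i ^ (-γ i - 1) ≠ 0 := ne_of_gt (Real.rpow_pos_of_pos (hx_pos i) _)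
        have hx0' : x i₀ ^ (-γ i₀ - 1) ≠ 0 := ne_of_gt (Real.rpow_pos_of_pos (hx_pos i₀) _)
        have hab : (β i * γ i) * (β i₀ * γ i₀) ≠ 0 :=
          ne_of_gt (mul_pos (mul_pos (hβ i) (hγ i)) (mul_pos (hβ i₀) (hγ i₀)))
        have key : (β i * γ i) * (β i₀ * γ i₀) *
              (y i ^ (-γ i - 1) * x i₀ ^ (-γ i₀ - 1))
            = (β i * γ i) * (β i₀ * γ i₀) *
              (y i₀ ^ (-γ i₀ - 1) * x i ^ (-γ i - 1)) := by
          linear_combination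
            ((β i₀ * γ i₀) * x i₀ ^ (-γ i₀ - 1)) * hy_i
            - ((β i₀ * γ i₀) * y i₀ ^ (-γ i₀ - 1)) * hx_i
        exact (div_eq_div_iff hx0 hx0').mpr (mul_left_cancel₀ hab key)
      rw [hratio, ← hy_i]
      ring
    have := autoscale_aux_suff β γ M z hβ hγ hM_pos hz_pos (by rw [hz_sum, hM_sum]) lam hlam
    simpa [hM_def] using this
end
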